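/- In the SD placement over a grid of shape g_1 × ... × g_k, two distinct points are never assigned the same grid position; i.e., the placement map S is injective. -/

import Mathlib

/-- A valid execution of the split-diffuse recursion (see the SD algorithm):
points are recursively partitioned between two disjoint sub-grids until each
cell contains one point, which is placed at the single remaining position. -/
inductive SDRun (k : ℕ) :
    (Fin k → ℕ) → (Fin k → ℕ) → List (Fin k → ℝ) →
    List ((Fin k → ℝ) × (Fin k → ℕ)) → Prop where
  | single (g c : Fin k → ℕ) (hg : ∀ i, g i = 1) (p : Fin k → ℝ) :
      SDRun k g c [p] [(p, c)]
  | split (g c : Fin k → ℕ) (a : Fin k) (ha : 2 ≤ g a) (hmax : ∀ i, g i ≤ g a)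
      (pts q : List (Fin k → ℝ)) (hperm : q.Perm pts)
      (hsort : q.Pairwise (fun p r => p a ≤ r a))
      (outl outr : List ((Fin k → ℝ) × (Fin k → ℕ)))
      (hl : SDRun k (Function.update g a (g a / 2)) c
              (q.take ((g a / 2) * ∏ i ∈ Finset.univ.erase a, g i)) outl)
      (hr : SDRun k (Function.update g a (g a - g a / 2))
              (Function.update c a (c a + g a / 2))
              (q.drop ((g a / 2) * ∏ i ∈ Finset.univ.erase a, g i)) outr) :
      SDRun k g c pts (outl ++ outr)

/-- in an SD placement, two distinct points are never assigned the
same grid position: the list of assigned positions has no duplicates, i.e. the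
placement map is injective. -/
lemma sd_bounds (k : ℕ) (g c : Fin k → ℕ)
    (pts : List (Fin k → ℝ)) (out : List ((Fin k → ℝ) × (Fin k → ℕ)))
    (hrun : SDRun k g c pts out) :
    ∀ px ∈ out, ∀ i, c i ≤ px.2 i ∧ px.2 i < c i + g i := by
  induction hrun with
  | single g c hg p =>
    intro px hpx i
    simp only [List.mem_singleton] at hpx
    subst hpx
    have := hg i
    simp
    omega
  | split g c a ha hmax pts q hperm hsort outl outr hl hr ihl ihr =>
    intro px hpx i
    have hdiv : g a / 2 ≤ g a := Nat.div_le_self _ _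
    rcases List.mem_append.mp hpx with h | h
    · have := ihl px h i
      by_cases hi : i = a
      · subst hi
        simp [Function.update_self] at this
        omega
      · simpa [Function.update_of_ne hi] using this
    · have := ihr px h i
      by_cases hi : i = a
      · subst hi
        simp [Function.update_self] at this
        omega
      · simpa [Function.update_of_ne hi] using this

theorem sd_placement_injective (k : ℕ) (g c : Fin k → ℕ)
    (pts : List (Fin k → ℝ)) (out : List ((Fin k → ℝ) × (Fin k → ℕ)))
    (hrun : SDRun k g c pts out) :
    (out.map Prod.snd).Nodup := by
  induction hrun with
  | single g c hg p => simp
  | split g c a ha hmax pts q hperm hsort outl outr hl hr ihl ihr =>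
    rw [List.map_append, List.nodup_append]
    refine ⟨ihl, ihr, ?_⟩
    intro x hx y hy hxy
    subst hxy
    simp only [List.mem_map] at hx hy
    obtain ⟨px, hpx, rfl⟩ := hx
    obtain ⟨py, hpy, heq⟩ := hy
    have h1 := (sd_bounds _ _ _ _ _ hl px hpx a).2
    have h2 := (sd_bounds _ _ _ _ _ hr py hpy a).1
    simp [Function.update_self, heq] at h1 h2
    omega
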